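/- Let n ≥ 1, let c ∈ ℝ^n with c_i > 0 for all i, let β ∈ (0,1), and set α = 1/(1-β). If p lies in the standard simplex {p ∈ ℝ^n : p_i ≥ 0, ∑_i p_i ≤ 1} and achieves ∑_{i=1}^n c_i · p_i^β = (∑_{i=1}^n c_i^α)^{1/α}, then p is the generalized proportional allocation, i.e. p_i = c_i^α / ∑_{j=1}^n c_j^α for every i. That is, when all ecpm values are strictly positive, the generalized proportional allocation is the unique welfare-maximizing prominence allocation. -/

import Mathlib

open Finset Real

/-- Tangent-line inequality for the strictly concave function `x ^ β`, strict version. -/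
lemma tangent_lt {β : ℝ} (hβ0 : 0 < β) (hβ1 : β < 1) {q x : ℝ} (hq : 0 < q) (hx : 0 ≤ x)
    (hne : x ≠ q) : x ^ β < q ^ β + β * q ^ (β - 1) * (x - q) := by
  have hs : -1 ≤ x / q - 1 := by
    have : (0:ℝ) ≤ x / q := div_nonneg hx hq.le
    linarith
  have hs' : x / q - 1 ≠ 0 := by
    have : x / q ≠ 1 := by
      intro h
      exact hne (by field_simp at h; linarith)
    intro h; exact this (by linarith [sub_eq_zero.mp h])
  have hb := rpow_one_add_lt_one_add_mul_self hs hs' hβ0 hβ1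
  rw [add_sub_cancel] at hb
  have hxq : x ^ β = q ^ β * (x / q) ^ β := by
    rw [← Real.mul_rpow hq.le (div_nonneg hx hq.le), mul_div_cancel₀ _ hq.ne']
  have hqb : 0 < q ^ β := Real.rpow_pos_of_pos hq β
  have hsub : q ^ (β - 1) = q ^ β / q := Real.rpow_sub_one hq.ne' β
  calc x ^ β = q ^ β * (x / q) ^ β := hxq
    _ < q ^ β * (1 + β * (x / q - 1)) := by
        exact (mul_lt_mul_iff_right₀ hqb).mpr hb
    _ = q ^ β + β * q ^ (β - 1) * (x - q) := by
        rw [hsub]; field_simp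

/-- Tangent-line inequality for `x ^ β`, non-strict version. -/
lemma tangent_le {β : ℝ} (hβ0 : 0 < β) (hβ1 : β < 1) {q x : ℝ} (hq : 0 < q) (hx : 0 ≤ x) :
    x ^ β ≤ q ^ β + β * q ^ (β - 1) * (x - q) := by
  rcases eq_or_ne x q with rfl | hne
  · simp
  · exact (tangent_lt hβ0 hβ1 hq hx hne).le

/-- When all ecpm values are strictly positive, any feasible prominence
allocation achieving welfare equal to the `α`-norm of `c` must be the generalized
proportional allocation, i.e. the welfare maximizer is unique. -/
theorem dwls_gpa_unique_maximizer
    (n : ℕ) (hn : 1 ≤ n) (c : Fin n → ℝ) (hc : ∀ i, 0 < c i)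
    (β : ℝ) (hβ0 : 0 < β) (hβ1 : β < 1) (α : ℝ) (hα : α = 1 / (1 - β))
    (p : Fin n → ℝ) (hp : ∀ i, 0 ≤ p i) (hpsum : ∑ i, p i ≤ 1)
    (hopt : ∑ i, c i * (p i) ^ β = (∑ i, (c i) ^ α) ^ (1 / α)) :
    ∀ i, p i = (c i) ^ α / ∑ j, (c j) ^ α := by
  have hβ' : (1:ℝ) - β ≠ 0 := by linarith
  have hinv : 1 / α = 1 - β := by rw [hα, one_div_one_div]
  set S : ℝ := ∑ j, (c j) ^ α with hS
  have hSpos : 0 < S := by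
    apply Finset.sum_pos (fun j _ => Real.rpow_pos_of_pos (hc j) α)
    exact Finset.univ_nonempty_iff.mpr (Fin.pos_iff_nonempty.mp hn)
  set q : Fin n → ℝ := fun i => (c i) ^ α / S with hqdef
  have hqpos : ∀ i, 0 < q i := fun i => div_pos (Real.rpow_pos_of_pos (hc i) α) hSpos
  -- key identity: c i * q i ^ (β - 1) = S ^ (1 - β)
  have keyA : ∀ i, c i * (q i) ^ (β - 1) = S ^ (1 - β) := by
    intro i
    have h1 : (q i) ^ (β - 1) = ((c i) ^ α) ^ (β - 1) / S ^ (β - 1) :=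
      Real.div_rpow (Real.rpow_pos_of_pos (hc i) α).le hSpos.le _
    have h2 : ((c i) ^ α) ^ (β - 1) = (c i) ^ (α * (β - 1)) :=
      (Real.rpow_mul (hc i).le α (β - 1)).symm
    have h3 : α * (β - 1) = -1 := by rw [hα]; field_simp; ring
    have h4 : (c i) ^ (-1 : ℝ) = 1 / c i := by
      rw [Real.rpow_neg_one]; exact inv_eq_one_div _
    have h5 : S ^ (β - 1) = 1 / S ^ (1 - β) := by
      rw [show β - 1 = -(1 - β) by ring, Real.rpow_neg hSpos.le]
      exact inv_eq_one_div _
    rw [h1, h2, h3, h4, h5]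
    have hcne := (hc i).ne'
    have hSb : S ^ (1 - β) ≠ 0 := (Real.rpow_pos_of_pos hSpos _).ne'
    field_simp
  -- key identity: c i * q i ^ β = c i ^ α * S ^ (-β)
  have keyB : ∀ i, c i * (q i) ^ β = (c i) ^ α * S ^ (-β : ℝ) := by
    intro i
    have : q i = q i ^ (1:ℝ) := by rw [Real.rpow_one]
    have h1 : (q i) ^ β = (q i) ^ (β - 1) * q i := by
      rw [Real.rpow_sub_one (hqpos i).ne' β, div_mul_cancel₀ _ (hqpos i).ne']
    rw [h1, show c i * ((q i) ^ (β - 1) * q i) = (c i * (q i) ^ (β - 1)) * q i by ring,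
      keyA i, hqdef]
    have h5 : S ^ (1 - β) / S = S ^ (-β : ℝ) := by
      rw [show (-β : ℝ) = (1 - β) - 1 by ring, Real.rpow_sub_one hSpos.ne']
    simp only
    rw [div_eq_mul_one_div, ← mul_assoc]
    rw [show S ^ (1 - β) * ((c i) ^ α) * (1 / S) = (c i) ^ α * (S ^ (1-β) / S) by ring, h5]
  have hsumq : ∑ i, q i = 1 := by
    rw [hqdef]
    simp only
    rw [← Finset.sum_div, ← hS, div_self hSpos.ne']
  -- the tangent upper bound, per index
  have hle : ∀ i ∈ Finset.univ, c i * (p i) ^ β ≤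
      c i * (q i) ^ β + β * S ^ (1 - β) * (p i - q i) := by
    intro i _
    have := tangent_le hβ0 hβ1 (hqpos i) (hp i)
    have h := mul_le_mul_of_nonneg_left this (hc i).le
    calc c i * (p i) ^ β ≤ c i * ((q i) ^ β + β * (q i) ^ (β - 1) * (p i - q i)) := h
      _ = c i * (q i) ^ β + β * (c i * (q i) ^ (β - 1)) * (p i - q i) := by ring
      _ = c i * (q i) ^ β + β * S ^ (1 - β) * (p i - q i) := by rw [keyA i]
  -- sum of the tangent bounds
  have hsumCB : ∑ i, c i * (q i) ^ β = S ^ (1 - β) := by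
    calc ∑ i, c i * (q i) ^ β = ∑ i, (c i) ^ α * S ^ (-β : ℝ) := by
          exact Finset.sum_congr rfl fun i _ => keyB i
      _ = S * S ^ (-β : ℝ) := by rw [← Finset.sum_mul, ← hS]
      _ = S ^ (1:ℝ) * S ^ (-β : ℝ) := by rw [Real.rpow_one]
      _ = S ^ (1 - β) := by rw [← Real.rpow_add hSpos]; congr 1
  have hsumRHS : ∑ i, (c i * (q i) ^ β + β * S ^ (1 - β) * (p i - q i)) =
      S ^ (1 - β) + β * S ^ (1 - β) * ((∑ i, p i) - 1) := by
    rw [Finset.sum_add_distrib, hsumCB, ← Finset.mul_sum, Finset.sum_sub_distrib, hsumq]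
  have hSb : 0 < S ^ (1 - β) := Real.rpow_pos_of_pos hSpos _
  have hRHSle : ∑ i, (c i * (q i) ^ β + β * S ^ (1 - β) * (p i - q i)) ≤ S ^ (1 - β) := by
    rw [hsumRHS]
    have h0 : (∑ i, p i) - 1 ≤ 0 := by linarith
    have := mul_nonpos_of_nonneg_of_nonpos (mul_pos hβ0 hSb).le h0
    linarith
  have hLHS : ∑ i, c i * (p i) ^ β = S ^ (1 - β) := by rw [hopt, hinv]
  have heq : ∑ i, c i * (p i) ^ β =
      ∑ i, (c i * (q i) ^ β + β * S ^ (1 - β) * (p i - q i)) := by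
    have h1 := Finset.sum_le_sum hle
    linarith [hRHSle, h1, hLHS.le, hLHS.ge]
  have hall := (Finset.sum_eq_sum_iff_of_le hle).mp heq
  intro i
  by_contra hne
  have hne' : p i ≠ q i := hne
  have hlt := tangent_lt hβ0 hβ1 (hqpos i) (hp i) hne'
  have h := mul_lt_mul_of_pos_left hlt (hc i)
  have heqi := hall i (Finset.mem_univ i)
  have : c i * (p i) ^ β < c i * (q i) ^ β + β * S ^ (1 - β) * (p i - q i) := by
    calc c i * (p i) ^ β < c i * ((q i) ^ β + β * (q i) ^ (β - 1) * (p i - q i)) := h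
      _ = c i * (q i) ^ β + β * (c i * (q i) ^ (β - 1)) * (p i - q i) := by ring
      _ = c i * (q i) ^ β + β * S ^ (1 - β) * (p i - q i) := by rw [keyA i]
  linarith [heqi.le, heqi.ge]
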